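/- Let b, c, e ∈ ℂ with e ≠ 0, and let U ⊆ ℂ be a nonempty connected open set. If y : U → ℂ is holomorphic and satisfies both the linear equation (L2): (4ex³ + 2cx + b)y''' + (60ex² + 10c)y'' + 240exy' + 240ey = 0 and the nonlinear equation (NL2): 72exy² + (b + 2cx + 4ex³)(y')² + (14c + 84ex²)yy' + (b + 2cx + 4ex³)yy'' = 0 at every point of U, then y is identically zero on U. -/

import Mathlib

open Polynomial

/-! Auxiliary polynomials for Statement 18. -/

noncomputable def st18qp (b c e : ℂ) : ℂ[X] := C b + C (2*c) * X + C (4*e) * X^3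

noncomputable def st18qp1 (c e : ℂ) : ℂ[X] := C (2*c) + C (12*e) * X^2

noncomputable def st18qE (b c e : ℂ) : ℂ[X] :=
  C (4*c^2) + C (24*b*e) * X + C (96*c*e) * X^2 + C (240*e^2) * X^4

noncomputable def st18qD (b c e : ℂ) : ℂ[X] :=
  C (1344*e*b^2) + C (1920*e*b*c) * X + C (-1536*e*c^2) * X^2 +
  C (-9984*b*e^2) * X^3 + C (-33792*c*e^2) * X^4 + C (-61440*e^3) * X^6

noncomputable def st18qP (b c e : ℂ) : ℂ[X] :=
  C (b^5) * X + C (5*b^4*c) * X^2 + C (40/3*b^3*c^2) * X^3 + C (20*b^2*c^3 + 5*b^4*e) * X^4 +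
  C (16*b*c^4 + 32*b^3*c*e) * X^5 + C (16/3*c^5 + 80*b^2*c^2*e) * X^6 +
  C (640/7*b*c^3*e + 160/7*b^3*e^2) * X^7 + C (40*c^4*e + 120*b^2*c*e^2) * X^8 +
  C (640/3*b*c^2*e^2) * X^9 + C (128*c^3*e^2 + 64*b^2*e^3) * X^10 + C (2560/11*b*c*e^3) * X^11 +
  C (640/3*c^2*e^3) * X^12 + C (1280/13*b*e^4) * X^13 + C (1280/7*c*e^4) * X^14 + C (64*e^5) * X^16

noncomputable def st18qL (b c e K C2 : ℂ) : ℂ[X] := C K * st18qP b c e + C C2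

noncomputable def st18qq (b c e K C2 : ℂ) : ℂ[X] :=
  C (3*K^3) * (st18qp b c e)^18
    + C (-22*K^2) * (st18qp1 c e * (st18qp b c e)^12 * st18qL b c e K C2)
    + C (24*K) * (st18qE b c e * (st18qp b c e)^6 * (st18qL b c e K C2)^2)
    + st18qD b c e * (st18qL b c e K C2)^3

/-- Derivative of the explicit antiderivative polynomial `st18qP` is `p^5`. -/
lemma st18qP_deriv (b c e z : ℂ) :
    eval z (derivative (st18qP b c e)) = (b + 2*c*z + 4*e*z^3)^5 := by
  simp only [st18qP, derivative_add, derivative_C_mul, derivative_X_pow, derivative_X,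
    Nat.cast_ofNat, eval_add, eval_mul, eval_C, eval_pow, eval_X, eval_natCast, mul_one]
  push_cast
  ring

/-- A function with zero derivative on a preconnected open subset of `ℂ` is constant there. -/
lemma st18const {U : Set ℂ} (hU : IsOpen U) (hpre : IsPreconnected U)
    {w : ℂ → ℂ} (hw : ∀ z ∈ U, HasDerivAt w 0 z) {a : ℂ} (ha : a ∈ U) :
    ∀ z ∈ U, w z = w a := by
  have hball : ∀ t r, Metric.ball t r ⊆ U → ∀ s ∈ Metric.ball t r, w s = w t := by
    intro t r hsub s hs
    have ht : t ∈ Metric.ball t r := Metric.mem_ball_self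
      (lt_of_le_of_lt dist_nonneg (Metric.mem_ball.mp hs))
    refine (convex_ball t r).is_const_of_fderivWithin_eq_zero (𝕜 := ℂ)
      (fun x hx => ((hw x (hsub hx)).differentiableAt).differentiableWithinAt) ?_ hs ht
    intro x hx
    rw [fderivWithin_of_isOpen Metric.isOpen_ball hx]
    have h0 : HasFDerivAt w (0 : ℂ →L[ℂ] ℂ) x := by
      have h1 := (hw x (hsub hx)).hasFDerivAt
      exact h1.congr_fderiv (by ext; simp)
    exact h0.fderiv
  intro z hz
  have hsub : U ⊆ {t | t ∈ U ∧ w t = w a} := by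
    refine hpre.subset_of_closure_inter_subset ?_ ⟨a, ha, ha, rfl⟩ ?_
    · refine isOpen_iff_mem_nhds.mpr ?_
      rintro t ⟨htU, htw⟩
      rcases Metric.isOpen_iff.mp hU t htU with ⟨r, hr, hsub⟩
      refine Filter.mem_of_superset (Metric.ball_mem_nhds t hr) ?_
      intro s hs
      exact ⟨hsub hs, (hball t r hsub s hs).trans htw⟩
    · rintro t ⟨htc, htU⟩
      rcases Metric.isOpen_iff.mp hU t htU with ⟨r, hr, hsubU⟩
      rcases Metric.mem_closure_iff.mp htc r hr with ⟨s, hsS, hds⟩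
      have hsball : s ∈ Metric.ball t r := by rwa [Metric.mem_ball, dist_comm]
      exact ⟨htU, ((hball t r hsubU s hsball).symm.trans hsS.2)⟩
  exact (hsub hz).2

/-- Pointwise algebraic elimination: from the two ODEs, the derivative of the nonlinear one,
and the first integral, derive the key cubic relation in `u = Y0²`. -/
lemma st18chain1 (p p1 p2 p3 Y0 Y1 Y2 Y3 K : ℂ)
    (hA : p * Y0 * Y2 + p * Y1^2 + 7*p1 * Y0 * Y1 + 3*p2 * Y0^2 = 0)
    (hB : p * Y3 + 5*p1 * Y2 + 10*p2 * Y1 + 10*p3 * Y0 = 0)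
    (hA' : p*Y0*Y3 + 3*p*Y1*Y2 + 8*p1*Y0*Y2 + 8*p1*Y1^2 + 13*p2*Y0*Y1 + 3*p3*Y0^2 = 0)
    (hK : p*(2*(Y0*Y1)) + 6*(p1*Y0^2) = K) :
    3*K^3 - 22*K^2*p1*Y0^2 + 24*K*(p1^2+p*p2)*Y0^4 + (56*p^2*p3-72*p*p1*p2)*Y0^6 = 0 := by
  have h3 : 3*p*Y1*Y2 + 3*p1*Y0*Y2 + 8*p1*Y1^2 + 3*p2*Y0*Y1 - 7*p3*Y0^2 = 0 := by
    linear_combination hA' - Y0 * hB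
  have h4 : 3*p^2*Y1^3 + 16*p*p1*Y0*Y1^2 + (6*p*p2+21*p1^2)*Y0^2*Y1
      + (9*p1*p2+7*p*p3)*Y0^3 = 0 := by
    linear_combination (3*p*Y1 + 3*p1*Y0) * hA - (p*Y0) * h3
  linear_combination (8*p*Y0^3) * h4
    - (3*((p*(2*Y0*Y1))^2 + (p*(2*Y0*Y1))*(K-6*p1*Y0^2) + (K-6*p1*Y0^2)^2)
       + 32*p1*Y0^2*(p*(2*Y0*Y1) + K - 6*p1*Y0^2)
       + 4*(6*p*p2+21*p1^2)*Y0^4) * hK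

/-- Clear denominators: substitute the explicit first integral `p⁶Y0² = L`. -/
lemma st18chain2 (p p1 p2 p3 Y0 K L : ℂ)
    (hstar : 3*K^3 - 22*K^2*p1*Y0^2 + 24*K*(p1^2+p*p2)*Y0^4 + (56*p^2*p3-72*p*p1*p2)*Y0^6 = 0)
    (hV : p^6*Y0^2 - L = 0) :
    3*K^3*p^18 - 22*K^2*(p1*p^12*L) + 24*K*((p1^2+p*p2)*p^6*L^2)
      + (56*p^2*p3-72*p*p1*p2)*L^3 = 0 := by
  have s2 : 3*K^3*p^6 - 22*K^2*p1*L + 24*K*(p1^2+p*p2)*Y0^2*L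
      + (56*p^2*p3-72*p*p1*p2)*Y0^4*L = 0 := by
    linear_combination p^6 * hstar
      - (-22*K^2*p1 + 24*K*(p1^2+p*p2)*Y0^2 + (56*p^2*p3-72*p*p1*p2)*Y0^4) * hV
  have s3 : 3*K^3*p^12 - 22*K^2*p1*p^6*L + 24*K*(p1^2+p*p2)*L^2
      + (56*p^2*p3-72*p*p1*p2)*Y0^2*L^2 = 0 := by
    linear_combination p^6 * s2
      - (24*K*(p1^2+p*p2)*L + (56*p^2*p3-72*p*p1*p2)*Y0^2*L) * hV
  linear_combination p^6 * s3 - ((56*p^2*p3-72*p*p1*p2)*L^2) * hV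

/-- When the first-integral constant `K` vanishes. -/
lemma st18chain3 (p p1 p2 p3 Y0 K Pv C2 : ℂ)
    (hstar : 3*K^3 - 22*K^2*p1*Y0^2 + 24*K*(p1^2+p*p2)*Y0^4 + (56*p^2*p3-72*p*p1*p2)*Y0^6 = 0)
    (hV : p^6*Y0^2 - K*Pv = C2) (hK0 : K = 0) :
    (56*p^2*p3-72*p*p1*p2)*C2^3 = 0 := by
  subst hK0
  linear_combination p^18 * hstar
    - ((56*p^2*p3-72*p*p1*p2)*((p^6*Y0^2)^2 + (p^6*Y0^2)*C2 + C2^2)) * hV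

set_option maxHeartbeats 4000000 in
/-- Extraction of the top coefficient: `st18qq = 0` forces `K = 0`. -/
lemma st18Kzero (b c e K C2 : ℂ) (he : e ≠ 0) (hq : st18qq b c e K C2 = 0) : K = 0 := by
  have h54 : (st18qq b c e K C2).coeff 54 = 0 := by rw [hq, coeff_zero]
  have hqp3 : (st18qp b c e).natDegree ≤ 3 := by unfold st18qp; compute_degree
  have hqp13 : (st18qp1 c e).natDegree ≤ 2 := by unfold st18qp1; compute_degree
  have hqE : (st18qE b c e).natDegree ≤ 4 := by unfold st18qE; compute_degree
  have hqD : (st18qD b c e).natDegree ≤ 6 := by unfold st18qD; compute_degree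
  have hqL : (st18qL b c e K C2).natDegree ≤ 16 := by unfold st18qL st18qP; compute_degree
  have hc3 : (st18qp b c e).coeff 3 = 4*e := by
    simp only [st18qp, coeff_add, coeff_C_mul, coeff_X_pow, coeff_C, coeff_X]; norm_num
  have hc13 : (st18qp1 c e).coeff 2 = 12*e := by
    simp only [st18qp1, coeff_add, coeff_C_mul, coeff_X_pow, coeff_C]; norm_num
  have hcE : (st18qE b c e).coeff 4 = 240*e^2 := by
    simp only [st18qE, coeff_add, coeff_C_mul, coeff_X_pow, coeff_C, coeff_X]; norm_num
  have hcD : (st18qD b c e).coeff 6 = -61440*e^3 := by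
    simp only [st18qD, coeff_add, coeff_C_mul, coeff_X_pow, coeff_C, coeff_X]; norm_num
  have hcL : (st18qL b c e K C2).coeff 16 = K * (64*e^5) := by
    simp only [st18qL, st18qP, coeff_add, coeff_C_mul, coeff_X_pow, coeff_C, coeff_X]; norm_num
  have e1 : ((st18qp b c e)^18).coeff 54 = (4*e)^18 := by
    have h : (54:ℕ) = 18*3 := by norm_num
    rw [h, coeff_pow_of_natDegree_le hqp3, hc3]
  have e2 : (st18qp1 c e * (st18qp b c e)^12 * st18qL b c e K C2).coeff 54
      = (12*e) * (4*e)^12 * (K * (64*e^5)) := by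
    have h38 : (st18qp1 c e * (st18qp b c e)^12).natDegree ≤ 38 :=
      natDegree_mul_le.trans (by
        have := natDegree_pow_le (p := st18qp b c e) (n := 12); omega)
    have h : (54:ℕ) = 38 + 16 := by norm_num
    rw [h, coeff_mul_add_eq_of_natDegree_le h38 hqL]
    have h2 : (38:ℕ) = 2 + 36 := by norm_num
    rw [h2, coeff_mul_add_eq_of_natDegree_le hqp13 (natDegree_pow_le.trans (by omega))]
    have h3 : (36:ℕ) = 12*3 := by norm_num
    rw [h3, coeff_pow_of_natDegree_le hqp3, hc3, hc13, hcL]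
  have e3 : (st18qE b c e * (st18qp b c e)^6 * (st18qL b c e K C2)^2).coeff 54
      = (240*e^2) * (4*e)^6 * (K * (64*e^5))^2 := by
    have h22 : (st18qE b c e * (st18qp b c e)^6).natDegree ≤ 22 :=
      natDegree_mul_le.trans (by
        have := natDegree_pow_le (p := st18qp b c e) (n := 6); omega)
    have h32 : ((st18qL b c e K C2)^2).natDegree ≤ 32 := natDegree_pow_le.trans (by omega)
    have h : (54:ℕ) = 22 + 32 := by norm_num
    rw [h, coeff_mul_add_eq_of_natDegree_le h22 h32]
    have h2 : (22:ℕ) = 4 + 18 := by norm_num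
    rw [h2, coeff_mul_add_eq_of_natDegree_le hqE (natDegree_pow_le.trans (by omega))]
    have h3 : (18:ℕ) = 6*3 := by norm_num
    rw [h3, coeff_pow_of_natDegree_le hqp3, hc3, hcE]
    have h4 : (32:ℕ) = 2*16 := by norm_num
    rw [h4, coeff_pow_of_natDegree_le hqL, hcL]
  have e4 : (st18qD b c e * (st18qL b c e K C2)^3).coeff 54
      = (-61440*e^3) * (K * (64*e^5))^3 := by
    have h : (54:ℕ) = 6 + 48 := by norm_num
    rw [h, coeff_mul_add_eq_of_natDegree_le hqD (natDegree_pow_le.trans (by omega))]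
    have h2 : (48:ℕ) = 3*16 := by norm_num
    rw [h2, coeff_pow_of_natDegree_le hqL, hcL, hcD]
  rw [st18qq, coeff_add, coeff_add, coeff_add, coeff_C_mul, coeff_C_mul, coeff_C_mul,
    e1, e2, e3, e4] at h54
  have hbig : (3221225472:ℂ)*K^3*e^18 = 0 := by linear_combination h54
  have h3 : K^3 = 0 := by
    have h18 : (e:ℂ)^18 ≠ 0 := pow_ne_zero _ he
    have hn : (3221225472:ℂ) ≠ 0 := by norm_num
    rcases mul_eq_zero.mp hbig with h' | h'
    · rcases mul_eq_zero.mp h' with h'' | h''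
      · exact absurd h'' hn
      · exact h''
    · exact absurd h' h18
  exact pow_eq_zero_iff (n := 3) (by norm_num) |>.mp h3

/-- Let `b, c, e ∈ ℂ` with `e ≠ 0` and let `U ⊆ ℂ` be a nonempty
connected open set. If `y` is holomorphic on `U` and satisfies both the linear
equation (L2): `(4ex³+2cx+b)y''' + (60ex²+10c)y'' + 240exy' + 240ey = 0` and the
nonlinear equation (NL2):
`72exy² + (b+2cx+4ex³)(y')² + (14c+84ex²)yy' + (b+2cx+4ex³)yy'' = 0`
at every point of `U`, then `y` is identically zero on `U`. -/
theorem statement18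
    (b c e : ℂ) (he : e ≠ 0)
    (U : Set ℂ) (hU : IsOpen U) (hUconn : IsConnected U)
    (y : ℂ → ℂ) (hy : DifferentiableOn ℂ y U)
    (hL2 : ∀ x ∈ U,
      (4 * e * x ^ 3 + 2 * c * x + b) * iteratedDeriv 3 y x
        + (60 * e * x ^ 2 + 10 * c) * iteratedDeriv 2 y x
        + 240 * e * x * deriv y x
        + 240 * e * y x = 0)
    (hNL2 : ∀ x ∈ U,
      72 * e * x * (y x) ^ 2
        + (b + 2 * c * x + 4 * e * x ^ 3) * (deriv y x) ^ 2
        + (14 * c + 84 * e * x ^ 2) * y x * deriv y x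
        + (b + 2 * c * x + 4 * e * x ^ 3) * y x * iteratedDeriv 2 y x = 0) :
    ∀ x ∈ U, y x = 0 := by
  obtain ⟨z₀, hz₀⟩ := hUconn.nonempty
  have hpre : IsPreconnected U := hUconn.isPreconnected
  have hYa : AnalyticOnNhd ℂ y U := hy.analyticOnNhd hU
  have hY1a : AnalyticOnNhd ℂ (deriv y) U := hYa.deriv
  have hY2a : AnalyticOnNhd ℂ (deriv (deriv y)) U := hY1a.deriv
  have hdy : ∀ z ∈ U, HasDerivAt y (deriv y z) z :=
    fun z hz => (hYa z hz).differentiableAt.hasDerivAt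
  have hdY1 : ∀ z ∈ U, HasDerivAt (deriv y) (deriv (deriv y) z) z :=
    fun z hz => (hY1a z hz).differentiableAt.hasDerivAt
  have hdY2 : ∀ z ∈ U, HasDerivAt (deriv (deriv y)) (deriv (deriv (deriv y)) z) z :=
    fun z hz => (hY2a z hz).differentiableAt.hasDerivAt
  have hit2 : iteratedDeriv 2 y = deriv (deriv y) := by
    rw [iteratedDeriv_succ, iteratedDeriv_one]
  have hit3 : iteratedDeriv 3 y = deriv (deriv (deriv y)) := by
    rw [iteratedDeriv_succ, iteratedDeriv_succ, iteratedDeriv_one]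
  -- the two equations, in normalized form
  have hA : ∀ z ∈ U, (b+2*c*z+4*e*z^3) * y z * deriv (deriv y) z
      + (b+2*c*z+4*e*z^3) * (deriv y z)^2 + 7*(2*c+12*e*z^2) * y z * deriv y z
      + 3*(24*e*z) * (y z)^2 = 0 := by
    intro z hz
    have h := hNL2 z hz
    rw [hit2] at h
    linear_combination h
  have hB : ∀ z ∈ U, (b+2*c*z+4*e*z^3) * deriv (deriv (deriv y)) z
      + 5*(2*c+12*e*z^2) * deriv (deriv y) z + 10*(24*e*z) * deriv y z
      + 10*(24*e) * y z = 0 := by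
    intro z hz
    have h := hL2 z hz
    rw [hit2, hit3] at h
    linear_combination h
  -- elementary derivative gadgets
  have hpf : ∀ z : ℂ, HasDerivAt (fun t : ℂ => b + 2*c*t + 4*e*t^3) (2*c + 12*e*z^2) z := by
    intro z
    have h := (((hasDerivAt_id z).const_mul (2*c)).const_add b).add
      ((hasDerivAt_pow 3 z).const_mul (4*e))
    have h2 : (2*c + 12*e*z^2 : ℂ) = 2*c*1 + 4*e*((3:ℕ) * z^(3-1)) := by push_cast; ring
    rw [h2]; exact h
  have hpf1 : ∀ z : ℂ, HasDerivAt (fun t : ℂ => 2*c + 12*e*t^2) (24*e*z) z := by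
    intro z
    have h := ((hasDerivAt_pow 2 z).const_mul (12*e)).const_add (2*c)
    have h2 : (24*e*z : ℂ) = 12*e*((2:ℕ) * z^(2-1)) := by push_cast; ring
    rw [h2]; exact h
  have hlin : ∀ z : ℂ, HasDerivAt (fun t : ℂ => 24*e*t) (24*e) z := by
    intro z
    simpa using (hasDerivAt_id z).const_mul (24*e)
  -- derivative of the nonlinear equation
  have hA' : ∀ z ∈ U, (b+2*c*z+4*e*z^3)*(y z)*(deriv (deriv (deriv y)) z)
      + 3*(b+2*c*z+4*e*z^3)*(deriv y z)*(deriv (deriv y) z)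
      + 8*(2*c+12*e*z^2)*(y z)*(deriv (deriv y) z) + 8*(2*c+12*e*z^2)*(deriv y z)^2
      + 13*(24*e*z)*(y z)*(deriv y z) + 3*(24*e)*(y z)^2 = 0 := by
    intro z hz
    have h1 := ((hpf z).mul (hdy z hz)).mul (hdY2 z hz)
    have h2 := (hpf z).mul ((hdY1 z hz).pow 2)
    have h3 := (((hpf1 z).const_mul (7:ℂ)).mul (hdy z hz)).mul (hdY1 z hz)
    have h4 := ((hlin z).const_mul (3:ℂ)).mul ((hdy z hz).pow 2)
    have hFd := ((h1.add h2).add h3).add h4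
    have hzero : HasDerivAt (fun t : ℂ => (b+2*c*t+4*e*t^3) * y t * deriv (deriv y) t
        + (b+2*c*t+4*e*t^3) * (deriv y t)^2 + 7*(2*c+12*e*t^2) * y t * deriv y t
        + 3*(24*e*t) * (y t)^2) 0 z := by
      have heq : (fun t : ℂ => (b+2*c*t+4*e*t^3) * y t * deriv (deriv y) t
          + (b+2*c*t+4*e*t^3) * (deriv y t)^2 + 7*(2*c+12*e*t^2) * y t * deriv y t
          + 3*(24*e*t) * (y t)^2) =ᶠ[nhds z] (fun _ => (0:ℂ)) := by
        filter_upwards [hU.mem_nhds hz] with t ht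
        exact hA t ht
      exact heq.hasDerivAt_iff.mpr (hasDerivAt_const z 0)
    have hD0 := hFd.unique hzero
    simp only [Pi.mul_apply, Pi.pow_apply] at hD0
    linear_combination hD0
  -- first integral of the nonlinear equation
  have hw : ∀ z ∈ U, HasDerivAt (fun t : ℂ => (b+2*c*t+4*e*t^3)*(2*(y t*deriv y t))
      + 6*((2*c+12*e*t^2)*(y t)^2)) 0 z := by
    intro z hz
    have h1 := (hpf z).mul (((hdy z hz).mul (hdY1 z hz)).const_mul (2:ℂ))
    have h2 := ((hpf1 z).mul ((hdy z hz).pow 2)).const_mul (6:ℂ)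
    have hd := h1.add h2
    refine hd.congr_deriv (Eq.symm ?_)
    simp only [Pi.mul_apply, Pi.pow_apply]
    rw [eq_comm]
    linear_combination 2 * (hA z hz)
  obtain ⟨K, hK⟩ : ∃ K : ℂ, ∀ z ∈ U, (b+2*c*z+4*e*z^3)*(2*(y z*deriv y z))
      + 6*((2*c+12*e*z^2)*(y z)^2) = K :=
    ⟨_, st18const hU hpre hw hz₀⟩
  -- second integral
  have hG : ∀ z ∈ U, HasDerivAt (fun t : ℂ => (b+2*c*t+4*e*t^3)^6*(y t)^2
      - K*(eval t (st18qP b c e))) 0 z := by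
    intro z hz
    have h1 := ((hpf z).pow 6).mul ((hdy z hz).pow 2)
    have h2 := ((st18qP b c e).hasDerivAt z).const_mul K
    have hd := h1.sub h2
    refine hd.congr_deriv (Eq.symm ?_)
    rw [eq_comm, st18qP_deriv b c e z]
    push_cast
    simp only [Pi.mul_apply, Pi.pow_apply]
    linear_combination ((b+2*c*z+4*e*z^3)^5) * (hK z hz)
  obtain ⟨C2, hV⟩ : ∃ C2 : ℂ, ∀ z ∈ U, (b+2*c*z+4*e*z^3)^6*(y z)^2
      - K*(eval z (st18qP b c e)) = C2 :=
    ⟨_, st18const hU hpre hG hz₀⟩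
  -- the key cubic relation
  have hstar : ∀ z ∈ U, 3*K^3 - 22*K^2*(2*c+12*e*z^2)*(y z)^2
      + 24*K*((2*c+12*e*z^2)^2+(b+2*c*z+4*e*z^3)*(24*e*z))*(y z)^4
      + (56*(b+2*c*z+4*e*z^3)^2*(24*e)-72*(b+2*c*z+4*e*z^3)*(2*c+12*e*z^2)*(24*e*z))*(y z)^6
      = 0 := by
    intro z hz
    exact st18chain1 (b+2*c*z+4*e*z^3) (2*c+12*e*z^2) (24*e*z) (24*e)
      (y z) (deriv y z) (deriv (deriv y) z) (deriv (deriv (deriv y)) z) K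
      (hA z hz) (hB z hz) (hA' z hz) (hK z hz)
  -- the polynomial identity
  have hqzero : st18qq b c e K C2 = 0 := by
    have hUinf : U.Infinite := infinite_of_mem_nhds z₀ (hU.mem_nhds hz₀)
    refine (st18qq b c e K C2).eq_zero_of_infinite_isRoot (hUinf.mono ?_)
    intro z hz
    have hVz : (b+2*c*z+4*e*z^3)^6*(y z)^2 - (K*(eval z (st18qP b c e)) + C2) = 0 := by
      linear_combination hV z hz
    have hs4 := st18chain2 (b+2*c*z+4*e*z^3) (2*c+12*e*z^2) (24*e*z) (24*e)
      (y z) K (K*(eval z (st18qP b c e)) + C2) (hstar z hz) hVz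
    show eval z (st18qq b c e K C2) = 0
    rw [st18qq]
    simp only [eval_add, eval_mul, eval_pow, eval_C, eval_X, st18qp, st18qp1, st18qE,
      st18qD, st18qL]
    linear_combination hs4
  have hK0 : K = 0 := st18Kzero b c e K C2 he hqzero
  -- now kill C2
  have hC2 : C2 = 0 := by
    have hDC : ∀ z ∈ U, eval z (st18qD b c e * C (C2^3)) = 0 := by
      intro z hz
      have h1 := st18chain3 (b+2*c*z+4*e*z^3) (2*c+12*e*z^2) (24*e*z) (24*e)
        (y z) K (eval z (st18qP b c e)) C2 (hstar z hz) (hV z hz) hK0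
      rw [eval_mul, eval_C]
      rw [st18qD]
      simp only [eval_add, eval_mul, eval_pow, eval_C, eval_X]
      linear_combination h1
    have hUinf : U.Infinite := infinite_of_mem_nhds z₀ (hU.mem_nhds hz₀)
    have hq0 : st18qD b c e * C (C2^3) = 0 :=
      (st18qD b c e * C (C2^3)).eq_zero_of_infinite_isRoot (hUinf.mono (fun z hz => hDC z hz))
    have h6 : (st18qD b c e * C (C2^3)).coeff 6 = 0 := by rw [hq0, coeff_zero]
    rw [coeff_mul_C] at h6
    have hcD : (st18qD b c e).coeff 6 = -61440*e^3 := by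
      simp only [st18qD, coeff_add, coeff_C_mul, coeff_X_pow, coeff_C, coeff_X]; norm_num
    rw [hcD] at h6
    have h3 : C2^3 = 0 := by
      have hne : (-61440:ℂ)*e^3 ≠ 0 :=
        mul_ne_zero (by norm_num) (pow_ne_zero _ he)
      rcases mul_eq_zero.mp h6 with h' | h'
      · exact absurd h' hne
      · exact h'
    exact pow_eq_zero_iff (n := 3) (by norm_num) |>.mp h3
  -- conclusion: p⁶ y² = 0 on U, hence y = 0 on U
  have hfin : ∀ z ∈ U, (b+2*c*z+4*e*z^3)^6*(y z)^2 = 0 := by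
    intro z hz
    have h := hV z hz
    rw [hK0, hC2] at h
    linear_combination h
  intro x hx
  by_contra hne
  have hev1 : ∀ᶠ t in nhds x, y t ≠ 0 := ((hYa x hx).continuousAt).eventually_ne hne
  have hevU : U ∈ nhds x := hU.mem_nhds hx
  have hN : {t | t ∈ U ∧ y t ≠ 0} ∈ nhds x := by
    filter_upwards [hevU, hev1] with t h1 h2
    exact ⟨h1, h2⟩
  have hNinf : {t : ℂ | t ∈ U ∧ y t ≠ 0}.Infinite := infinite_of_mem_nhds x hN
  have hqpne : st18qp b c e ≠ 0 := by
    intro h0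
    have hc3 : (st18qp b c e).coeff 3 = 4*e := by
      simp only [st18qp, coeff_add, coeff_C_mul, coeff_X_pow, coeff_C, coeff_X]; norm_num
    rw [h0, coeff_zero] at hc3
    rcases mul_eq_zero.mp hc3.symm with h' | h'
    · norm_num at h'
    · exact he h'
  have hroots : {t : ℂ | (st18qp b c e).IsRoot t}.Finite :=
    Polynomial.finite_setOf_isRoot hqpne
  obtain ⟨t, htN, htr⟩ := (hNinf.diff hroots).nonempty
  have htp : (b+2*c*t+4*e*t^3) ≠ 0 := by
    intro h0
    apply htr
    show (st18qp b c e).IsRoot t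
    rw [Polynomial.IsRoot]
    simp only [st18qp, eval_add, eval_mul, eval_C, eval_X, eval_pow]
    linear_combination h0
  have := hfin t htN.1
  rcases mul_eq_zero.mp this with h' | h'
  · exact htp (pow_eq_zero_iff (n := 6) (by norm_num) |>.mp h')
  · exact htN.2 (pow_eq_zero_iff (n := 2) (by norm_num) |>.mp h')
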